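/- arXiv:1302.4094 — 2 statements merged into one kernel-verified Lean document; each statement's English description precedes it below -/
import Mathlib

section
/- Let α_m be a short simple root and let w ∈ W be the unique element of minimal length l(w) = (l(s_ϑ)−1)/2 with w(ϑ) = α_m, where ϑ is the highest short root; fix any reduced decomposition w = s_{j_p}⋯s_{j_1}. Then for every 1 ≤ k ≤ p one has (s_{j_k} s_{j_{k−1}}⋯s_{j_1}(ϑ), α_{j_k}^∨) = −1; equivalently, (s_{j_{k+1}}⋯s_{j_p}(α_m), α_{j_k}^∨) = −1. -/
open scoped RealInnerProductSpace Classical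

noncomputable section

/-- Euclidean space ℝⁿ. -/
abbrev EV (n : ℕ) := EuclideanSpace ℝ (Fin n)

/-- ν_α = (α,α)/2. -/
def nuu {n : ℕ} (α : EV n) : ℝ := ⟪α, α⟫ / 2

/-- α^∨ = 2α/(α,α). -/
def coroot {n : ℕ} (α : EV n) : EV n := (2 / ⟪α, α⟫) • α

/-- the reflection s_α. -/
def srefl {n : ℕ} (α : EV n) : EV n → EV n :=
  fun z => z - (2 * ⟪z, α⟫ / ⟪α, α⟫) • α

/-- the affine reflection s_ã attached to ã = [α, ν_α j], acting linearly on ℝⁿ × ℝ. -/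
def aRefl {n : ℕ} (p : EV n × ℝ) : EV n × ℝ → EV n × ℝ :=
  fun z => z - (2 * ⟪z.1, p.1⟫ / ⟪p.1, p.1⟫) • p

/-- the translation element b' ∈ Ŵ, b'([z,ζ]) = [z, ζ − (z,b)]. -/
def transl {n : ℕ} (b : EV n) : EV n × ℝ → EV n × ℝ :=
  fun z => (z.1, z.2 - ⟪z.1, b⟫)

/-- extension of a nonaffine transformation to ℝⁿ × ℝ. -/
def affExt {n : ℕ} (w : EV n → EV n) : EV n × ℝ → EV n × ℝ :=
  fun z => (w z.1, z.2)

/-- An irreducible reduced crystallographic root system in ℝⁿ, with a fixed system of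
positive/simple roots, normalized so that (α,α) = 2 for short roots; `hishort` is the
highest short root ϑ and `hiroot` the highest root θ. -/
structure RootCtx (n : ℕ) where
  R : Finset (EV n)
  pos : Finset (EV n)
  simple : Fin n → EV n
  hishort : EV n
  hiroot : EV n
  nonzero : ∀ α ∈ R, α ≠ (0 : EV n)
  neg_mem : ∀ α ∈ R, -α ∈ R
  reduced : ∀ α ∈ R, ∀ t : ℝ, t • α ∈ R → t = 1 ∨ t = -1
  crys : ∀ α ∈ R, ∀ β ∈ R, ∃ m : ℤ, 2 * ⟪β, α⟫ / ⟪α, α⟫ = (m : ℝ)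
  reflect_mem : ∀ α ∈ R, ∀ β ∈ R, β - (2 * ⟪β, α⟫ / ⟪α, α⟫) • α ∈ R
  span_top : Submodule.span ℝ (R : Set (EV n)) = ⊤
  pos_subset : pos ⊆ R
  pos_iff : ∀ α ∈ R, (α ∈ pos ↔ -α ∉ pos)
  simple_pos : ∀ i, simple i ∈ pos
  simple_inj : Function.Injective simple
  pos_sum : ∀ α ∈ pos, ∃ f : Fin n → ℕ, α = ∑ i, (f i : ℝ) • simple i
  irred : ∀ S : Finset (EV n), S ⊆ R → S.Nonempty →
      (∀ α ∈ S, ∀ β ∈ R, β ∉ S → ⟪α, β⟫ = 0) → S = R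
  normalized : ∀ α ∈ R, (∀ β ∈ R, ⟪α, α⟫ ≤ ⟪β, β⟫) → ⟪α, α⟫ = 2
  hishort_pos : hishort ∈ pos
  hishort_short : ⟪hishort, hishort⟫ = 2
  hishort_high : ∀ α ∈ R, ⟪α, α⟫ = 2 →
      ∃ f : Fin n → ℕ, hishort - α = ∑ i, (f i : ℝ) • simple i
  hiroot_pos : hiroot ∈ pos
  hiroot_high : ∀ α ∈ R, ∃ f : Fin n → ℕ, hiroot - α = ∑ i, (f i : ℝ) • simple i

namespace RootCtx

variable {n : ℕ} (c : RootCtx n)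

/-- word in the simple reflections of W; the letters are listed in the order of
application (the first letter of the list acts first), so `[i₁, …, i_l]`
represents s_{i_l} ⋯ s_{i_1}. -/
def wWord (L : List (Fin n)) : EV n → EV n :=
  L.foldl (fun f i => srefl (c.simple i) ∘ f) id

/-- membership in the Weyl group W. -/
def IsWeyl (w : EV n → EV n) : Prop := ∃ L : List (Fin n), w = c.wWord L

/-- λ(w) = {α ∈ R₊ : w(α) ∈ R₋}. -/
def lamW (w : EV n → EV n) : Finset (EV n) :=
  c.pos.filter (fun α => -(w α) ∈ c.pos)

/-- λ_ν(w). -/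
def lamWnu (w : EV n → EV n) (ν : ℝ) : Finset (EV n) :=
  (c.lamW w).filter (fun α => nuu α = ν)

/-- the length l(w) = |λ(w)| of w ∈ W. -/
def lenW (w : EV n → EV n) : ℕ := (c.lamW w).card

/-- ρ_ν = (1/2) Σ_{α ∈ R₊, ν_α = ν} α. -/
def rho (ν : ℝ) : EV n :=
  (1 / 2 : ℝ) • ∑ α ∈ c.pos.filter (fun α => nuu α = ν), α

/-- ρ_ν^∨ = ρ_ν / ν. -/
def rhoCheck (ν : ℝ) : EV n := ν⁻¹ • c.rho ν

/-- the affine root system R̃ ⊂ ℝⁿ × ℝ. -/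
def aR : Set (EV n × ℝ) := {p | ∃ α ∈ c.R, ∃ j : ℤ, p = (α, nuu α * j)}

/-- positive affine roots. -/
def aPos : Set (EV n × ℝ) :=
  {p | p ∈ c.aR ∧ (0 < p.2 ∨ (p.2 = 0 ∧ p.1 ∈ c.pos))}

/-- negative affine roots. -/
def aNeg : Set (EV n × ℝ) := {p | -p ∈ c.aPos}

/-- the affine simple roots α_0, α_1, …, α_n; the index 0 corresponds to
α₀ = [−ϑ, 1]. -/
def asimple : Fin (n + 1) → EV n × ℝ :=
  fun i => if h : i = 0 then (-c.hishort, (1 : ℝ)) else (c.simple (i.pred h), (0 : ℝ))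

/-- the affine simple reflections s_0, s_1, …, s_n. -/
def aS (i : Fin (n + 1)) : EV n × ℝ → EV n × ℝ := aRefl (c.asimple i)

/-- word in the affine simple reflections (letters in order of application). -/
def affWord (L : List (Fin (n + 1))) : EV n × ℝ → EV n × ℝ :=
  L.foldl (fun f i => c.aS i ∘ f) id

/-- the weight lattice P. -/
def PwSet : Set (EV n) :=
  {b | ∀ i, ∃ m : ℤ, 2 * ⟪b, c.simple i⟫ / ⟪c.simple i, c.simple i⟫ = (m : ℝ)}

/-- the dominant weights P₊. -/
def PplusSet : Set (EV n) :=
  {b | b ∈ c.PwSet ∧ ∀ i, 0 ≤ ⟪b, c.simple i⟫}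

/-- membership in the extended affine Weyl group Ŵ = W ⋉ P,
via the normal form w·b' with w ∈ W and b ∈ P. -/
def IsExtW (f : EV n × ℝ → EV n × ℝ) : Prop :=
  ∃ w b, c.IsWeyl w ∧ b ∈ c.PwSet ∧ f = affExt w ∘ transl b

/-- membership in Π = {π ∈ Ŵ : π(R̃₊) = R̃₊}. -/
def IsPi (f : EV n × ℝ → EV n × ℝ) : Prop :=
  c.IsExtW f ∧ f '' c.aPos = c.aPos

/-- the λ-set λ(ŵ) = R̃₊ ∩ ŵ⁻¹(R̃₋) of an affine transformation. -/
def aLam (f : EV n × ℝ → EV n × ℝ) : Set (EV n × ℝ) :=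
  {p | p ∈ c.aPos ∧ f p ∈ c.aNeg}

/-- the ν-part λ_ν(ŵ). -/
def aLamNu (f : EV n × ℝ → EV n × ℝ) (ν : ℝ) : Set (EV n × ℝ) :=
  {p | p ∈ c.aLam f ∧ nuu p.1 = ν}

/-- the length l(ŵ) = |λ(ŵ)|. -/
def aLen (f : EV n × ℝ → EV n × ℝ) : ℕ := (c.aLam f).ncard

/-- `(π, L)` is a reduced decomposition ŵ = π_r s_{i_l} ⋯ s_{i_1}: π ∈ Π and
the word length is minimal among all such presentations of the same element. -/
def IsReducedA (π : EV n × ℝ → EV n × ℝ) (L : List (Fin (n + 1))) : Prop :=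
  c.IsPi π ∧
    ∀ (π' : EV n × ℝ → EV n × ℝ) (L' : List (Fin (n + 1))),
      c.IsPi π' → π' ∘ c.affWord L' = π ∘ c.affWord L → L.length ≤ L'.length

/-- the λ-sequence α̃¹, α̃², … of a word (0-based indexing):
α̃^{k+1} = s_{i_1} s_{i_2} ⋯ s_{i_k}(α_{i_{k+1}}). -/
def lamSeq (L : List (Fin (n + 1))) (k : Fin L.length) : EV n × ℝ :=
  ((L.take k).foldr (fun i f => c.aS i ∘ f) id) (c.asimple (L.get k))

/-- the λ-sequence of a word in W (0-based indexing). -/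
def lamSeqW (L : List (Fin n)) (k : Fin L.length) : EV n :=
  ((L.take k).foldr (fun i f => srefl (c.simple i) ∘ f) id) (c.simple (L.get k))

end RootCtx


namespace RootCtx

variable {n : ℕ} (c : RootCtx n)

lemma simple_mem_R (i : Fin n) : c.simple i ∈ c.R := c.pos_subset (c.simple_pos i)

lemma simple_ne_zero (i : Fin n) : c.simple i ≠ 0 := c.nonzero _ (c.simple_mem_R i)

lemma srefl_add {α x y : EV n} : srefl α (x + y) = srefl α x + srefl α y := by
  simp only [srefl, inner_add_left]
  rw [mul_add, add_div, add_smul]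
  abel

lemma srefl_smul {α : EV n} {t : ℝ} {x : EV n} : srefl α (t • x) = t • srefl α x := by
  simp only [srefl, real_inner_smul_left, smul_sub, smul_smul]
  ring_nf

lemma srefl_neg {α x : EV n} : srefl α (-x) = -(srefl α x) := by
  have := srefl_smul (α := α) (t := (-1:ℝ)) (x := x)
  simpa using this

lemma srefl_sub {α x y : EV n} : srefl α (x - y) = srefl α x - srefl α y := by
  rw [sub_eq_add_neg, srefl_add, srefl_neg, sub_eq_add_neg]

lemma srefl_inner {α : EV n} (hα : α ≠ 0) (x y : EV n) :
    ⟪srefl α x, srefl α y⟫ = ⟪x, y⟫ := by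
  have hA : ⟪α, α⟫ ≠ 0 := inner_self_ne_zero.mpr hα
  simp only [srefl, inner_sub_left, inner_sub_right, real_inner_smul_left,
    real_inner_smul_right]
  rw [real_inner_comm α x, real_inner_comm α y]
  generalize ⟪x, α⟫ = a at *
  generalize ⟪y, α⟫ = b at *
  generalize hA' : ⟪α, α⟫ = A at *
  field_simp
  ring

lemma srefl_srefl {α : EV n} (hα : α ≠ 0) (x : EV n) : srefl α (srefl α x) = x := by
  have hA : ⟪α, α⟫ ≠ 0 := inner_self_ne_zero.mpr hα
  simp only [srefl, inner_sub_left, real_inner_smul_left]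
  generalize ⟪x, α⟫ = a at *
  generalize hA' : ⟪α, α⟫ = A at *
  have h2 : 2 * (a - 2 * a / A * A) / A = -(2 * a / A) := by
    field_simp; ring
  rw [h2, neg_smul, sub_neg_eq_add, sub_add_cancel]

end RootCtx
namespace RootCtx

variable {n : ℕ} (c : RootCtx n)

lemma foldl_eq (L : List (Fin n)) (g : EV n → EV n) :
    L.foldl (fun f i => srefl (c.simple i) ∘ f) g = c.wWord L ∘ g := by
  induction L generalizing g with
  | nil => rfl
  | cons i L ih =>
      show L.foldl _ (srefl (c.simple i) ∘ g) = _
      rw [ih]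
      have : c.wWord (i :: L) = c.wWord L ∘ (srefl (c.simple i)) := by
        show L.foldl _ (srefl (c.simple i) ∘ id) = _
        rw [ih]; rfl
      rw [this]; rfl

lemma wWord_nil : c.wWord [] = id := rfl

lemma wWord_cons (i : Fin n) (L : List (Fin n)) :
    c.wWord (i :: L) = c.wWord L ∘ srefl (c.simple i) := by
  show L.foldl _ (srefl (c.simple i) ∘ id) = _
  rw [c.foldl_eq]; rfl

lemma wWord_append (L M : List (Fin n)) :
    c.wWord (L ++ M) = c.wWord M ∘ c.wWord L := by
  show (L ++ M).foldl _ id = _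
  rw [List.foldl_append, c.foldl_eq, c.foldl_eq]
  show c.wWord M ∘ (c.wWord L ∘ id) = _
  rfl

lemma wWord_singleton (i : Fin n) (x : EV n) : c.wWord [i] x = srefl (c.simple i) x := rfl

lemma wWord_concat (L : List (Fin n)) (i : Fin n) :
    c.wWord (L ++ [i]) = srefl (c.simple i) ∘ c.wWord L := by
  rw [c.wWord_append]; rfl

lemma wWord_add (L : List (Fin n)) (x y : EV n) :
    c.wWord L (x + y) = c.wWord L x + c.wWord L y := by
  induction L generalizing x y with
  | nil => rfl
  | cons i L ih => simp only [wWord_cons, Function.comp_apply, srefl_add, ih]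

lemma wWord_smul (L : List (Fin n)) (t : ℝ) (x : EV n) :
    c.wWord L (t • x) = t • c.wWord L x := by
  induction L generalizing x with
  | nil => rfl
  | cons i L ih => simp only [wWord_cons, Function.comp_apply, srefl_smul, ih]

lemma wWord_neg (L : List (Fin n)) (x : EV n) : c.wWord L (-x) = -(c.wWord L x) := by
  have := c.wWord_smul L (-1) x; simpa using this

lemma wWord_sub (L : List (Fin n)) (x y : EV n) :
    c.wWord L (x - y) = c.wWord L x - c.wWord L y := by
  rw [sub_eq_add_neg, c.wWord_add, c.wWord_neg, sub_eq_add_neg]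

lemma wWord_inner (L : List (Fin n)) (x y : EV n) :
    ⟪c.wWord L x, c.wWord L y⟫ = ⟪x, y⟫ := by
  induction L generalizing x y with
  | nil => rfl
  | cons i L ih =>
      simp only [wWord_cons, Function.comp_apply, ih]
      exact srefl_inner (c.simple_ne_zero i) x y

lemma wWord_reverse_apply (L : List (Fin n)) (x : EV n) :
    c.wWord L.reverse (c.wWord L x) = x := by
  induction L generalizing x with
  | nil => rfl
  | cons i L ih =>
      rw [List.reverse_cons, c.wWord_concat, c.wWord_cons]
      simp only [Function.comp_apply]
      rw [ih, srefl_srefl (c.simple_ne_zero i)]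

lemma wWord_apply_reverse (L : List (Fin n)) (x : EV n) :
    c.wWord L (c.wWord L.reverse x) = x := by
  have := c.wWord_reverse_apply L.reverse x
  rwa [List.reverse_reverse] at this

lemma wWord_mem_R (L : List (Fin n)) {α : EV n} (h : α ∈ c.R) : c.wWord L α ∈ c.R := by
  induction L generalizing α with
  | nil => exact h
  | cons i L ih =>
      rw [c.wWord_cons]
      exact ih (c.reflect_mem _ (c.simple_mem_R i) _ h)

end RootCtx
namespace RootCtx

variable {n : ℕ} (c : RootCtx n)

lemma mem_pos_or_neg {α : EV n} (h : α ∈ c.R) : α ∈ c.pos ∨ -α ∈ c.pos := by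
  by_cases hp : α ∈ c.pos
  · exact Or.inl hp
  · exact Or.inr ((c.pos_iff (-α) (c.neg_mem α h)).mpr (by simpa using hp))

lemma not_neg_mem_pos {α : EV n} (h : α ∈ c.pos) : -α ∉ c.pos :=
  (c.pos_iff α (c.pos_subset h)).mp h

lemma span_simple : ⊤ ≤ Submodule.span ℝ (Set.range c.simple) := by
  rw [← c.span_top]
  refine Submodule.span_le.mpr ?_
  intro α hα
  have hmem : ∀ β ∈ c.pos, β ∈ Submodule.span ℝ (Set.range c.simple) := by
    intro β hβ
    obtain ⟨f, hf⟩ := c.pos_sum β hβ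
    rw [hf]
    exact Submodule.sum_mem _ fun i _ =>
      Submodule.smul_mem _ _ (Submodule.subset_span ⟨i, rfl⟩)
  rcases c.mem_pos_or_neg (by simpa using hα) with h | h
  · exact hmem α h
  · have := hmem _ h
    simpa using Submodule.neg_mem _ this

set_option maxHeartbeats 1000000 in
lemma simple_indep : LinearIndependent ℝ c.simple := by
  have hcard : Fintype.card (Fin n) = Module.finrank ℝ (EV n) := by
    simp [finrank_euclideanSpace]
  have h := (basisOfTopLeSpanOfCardEqFinrank c.simple c.span_simple hcard).linearIndependent
  rwa [coe_basisOfTopLeSpanOfCardEqFinrank] at h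

lemma coeff_eq {f g : Fin n → ℝ}
    (h : ∑ i, f i • c.simple i = ∑ i, g i • c.simple i) : f = g := by
  have hind := c.simple_indep
  rw [Fintype.linearIndependent_iff] at hind
  funext i
  have : ∑ j, (f j - g j) • c.simple j = 0 := by
    simp only [sub_smul, Finset.sum_sub_distrib, h, sub_self]
  have := hind (fun j => f j - g j) this i
  linarith

lemma sum_single_smul (t : ℝ) (i : Fin n) :
    ∑ j, (if j = i then t else 0) • c.simple j = t • c.simple i := by
  simp [ite_smul]
lemma two_le_inner_self {α : EV n} (h : α ∈ c.R) : 2 ≤ ⟪α, α⟫ := by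
  obtain ⟨β, hβ, hmin⟩ := Finset.exists_min_image c.R (fun γ => (⟪γ, γ⟫ : ℝ))
    ⟨c.hishort, c.pos_subset c.hishort_pos⟩
  have := c.normalized β hβ hmin
  calc (2:ℝ) = ⟪β, β⟫ := this.symm
    _ ≤ ⟪α, α⟫ := hmin α h

lemma theta_dominant (i : Fin n) : 0 ≤ ⟪c.hishort, c.simple i⟫ := by
  by_contra hneg
  push_neg at hneg
  have hApos : (0:ℝ) < ⟪c.simple i, c.simple i⟫ := by
    have := c.two_le_inner_self (c.simple_mem_R i); linarith
  set t : ℝ := 2 * ⟪c.hishort, c.simple i⟫ / ⟪c.simple i, c.simple i⟫ with ht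
  have htneg : t < 0 := div_neg_of_neg_of_pos (by linarith) hApos
  set δ : EV n := c.hishort - t • c.simple i with hδ
  have hδR : δ ∈ c.R := c.reflect_mem _ (c.simple_mem_R i) _ (c.pos_subset c.hishort_pos)
  have hδ2 : ⟪δ, δ⟫ = 2 := by
    have h0 : δ = srefl (c.simple i) c.hishort := rfl
    rw [h0, srefl_inner (c.simple_ne_zero i)]
    exact c.hishort_short
  obtain ⟨f, hf⟩ := c.hishort_high δ hδR hδ2
  have hsub : c.hishort - δ = t • c.simple i := by rw [hδ]; abel
  have hs : ∑ j, (fun j => if j = i then t else 0) j • c.simple j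
      = ∑ j, (fun j => (f j : ℝ)) j • c.simple j := by
    rw [c.sum_single_smul t i, ← hsub, hf]
  have hci := congrFun (c.coeff_eq hs) i
  simp only [if_pos rfl, if_true] at hci
  have : (0:ℝ) ≤ t := by rw [hci]; positivity
  linarith

lemma pos_inner_theta_nonneg {β : EV n} (h : β ∈ c.pos) : 0 ≤ ⟪c.hishort, β⟫ := by
  obtain ⟨f, hf⟩ := c.pos_sum β h
  rw [hf, inner_sum]
  refine Finset.sum_nonneg fun i _ => ?_
  rw [real_inner_smul_right]
  exact mul_nonneg (by positivity) (c.theta_dominant i)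

lemma srefl_simple_mem_pos {β : EV n} (i : Fin n) (hβ : β ∈ c.pos)
    (hne : β ≠ c.simple i) : srefl (c.simple i) β ∈ c.pos := by
  set δ := srefl (c.simple i) β with hδ
  have hδR : δ ∈ c.R := c.reflect_mem _ (c.simple_mem_R i) _ (c.pos_subset hβ)
  by_contra hnot
  have hnd : -δ ∈ c.pos := (c.mem_pos_or_neg hδR).resolve_left hnot
  obtain ⟨f, hf⟩ := c.pos_sum β hβ
  obtain ⟨g, hg⟩ := c.pos_sum (-δ) hnd
  set t : ℝ := 2 * ⟪β, c.simple i⟫ / ⟪c.simple i, c.simple i⟫ with ht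
  have hβδ : β + -δ = t • c.simple i := by
    have h0 : δ = β - t • c.simple i := rfl
    rw [h0]; abel
  have hsum : ∑ j, (fun j => (f j : ℝ) + (g j : ℝ)) j • c.simple j
      = ∑ j, (fun j => if j = i then t else 0) j • c.simple j := by
    rw [c.sum_single_smul t i, ← hβδ, hf, hg]
    simp [add_smul, Finset.sum_add_distrib]
  have hco := c.coeff_eq hsum
  have hfz : ∀ j, j ≠ i → (f j : ℝ) = 0 := by
    intro j hj
    have h1 := congrFun hco j
    simp only [if_neg hj] at h1
    have h2 : (0:ℝ) ≤ f j := by positivity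
    have h3 : (0:ℝ) ≤ g j := by positivity
    linarith
  have hβi : β = (f i : ℝ) • c.simple i := by
    rw [hf, Finset.sum_eq_single i]
    · intro j _ hj; rw [hfz j hj, zero_smul]
    · intro h; exact absurd (Finset.mem_univ i) h
  have := c.reduced (c.simple i) (c.simple_mem_R i) (f i : ℝ)
    (by rw [← hβi]; exact c.pos_subset hβ)
  rcases this with h1 | h1
  · rw [h1, one_smul] at hβi; exact hne hβi
  · have h2 : (0:ℝ) ≤ (f i : ℝ) := by positivity
    rw [h1] at h2; linarith

end RootCtx
namespace RootCtx

variable {n : ℕ} (c : RootCtx n)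

lemma srefl_self {α : EV n} (hα : α ≠ 0) : srefl α α = -α := by
  have hA : ⟪α, α⟫ ≠ 0 := inner_self_ne_zero.mpr hα
  simp only [srefl]
  rw [mul_div_assoc, div_self hA, mul_one, two_smul]
  abel

lemma neg_srefl_mem_pos_iff {δ : EV n} (a : Fin n) (hδ : δ ∈ c.R) :
    -(srefl (c.simple a) δ) ∈ c.pos ↔
      (δ = c.simple a ∨ (-δ ∈ c.pos ∧ δ ≠ -c.simple a)) := by
  constructor
  · intro h
    by_contra hc
    push_neg at hc
    obtain ⟨h1, h2⟩ := hc
    by_cases hp : -δ ∈ c.pos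
    · have hδa : δ = -c.simple a := h2 hp
      rw [hδa, srefl_neg, srefl_self (c.simple_ne_zero a), neg_neg] at h
      exact c.not_neg_mem_pos (c.simple_pos a) h
    · have hδp : δ ∈ c.pos := (c.mem_pos_or_neg hδ).resolve_right hp
      exact c.not_neg_mem_pos (c.srefl_simple_mem_pos a hδp h1) h
  · rintro (rfl | ⟨hp, hne⟩)
    · rw [srefl_self (c.simple_ne_zero a), neg_neg]
      exact c.simple_pos a
    · have h2 : -δ ≠ c.simple a := by
        intro h; exact hne (by rw [← h, neg_neg])
      have := c.srefl_simple_mem_pos a hp h2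
      rwa [srefl_neg] at this

lemma lamW_step (M : List (Fin n)) (a : Fin n) :
    (c.wWord M.reverse (c.simple a) ∈ c.pos ∧
      c.lenW (srefl (c.simple a) ∘ c.wWord M) = c.lenW (c.wWord M) + 1) ∨
    (c.wWord M.reverse (c.simple a) ∉ c.pos ∧
      c.lenW (c.wWord M) = c.lenW (srefl (c.simple a) ∘ c.wWord M) + 1) := by
  set u := c.wWord M with hu
  set u' := c.wWord M.reverse with hu'
  set γ := u' (c.simple a) with hγdef
  have hγR : γ ∈ c.R := c.wWord_mem_R _ (c.simple_mem_R a)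
  have huu' : ∀ x, u (u' x) = x := fun x => c.wWord_apply_reverse M x
  have hu'u : ∀ x, u' (u x) = x := fun x => c.wWord_reverse_apply M x
  have huγ : u γ = c.simple a := huu' _
  have hfil : c.lamW (srefl (c.simple a) ∘ u) =
      c.pos.filter (fun α => α = γ ∨ (-(u α) ∈ c.pos ∧ α ≠ -γ)) := by
    unfold lamW
    refine Finset.filter_congr fun α hα => ?_
    have huR : u α ∈ c.R := c.wWord_mem_R _ (c.pos_subset hα)
    show -(srefl (c.simple a) (u α)) ∈ c.pos ↔ _
    rw [c.neg_srefl_mem_pos_iff a huR]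
    constructor
    · rintro (h | ⟨h1, h2⟩)
      · left; rw [← hu'u α, h]
      · right
        refine ⟨h1, fun hc => h2 ?_⟩
        rw [hc]
        rw [show u (-γ) = -(u γ) from c.wWord_neg M γ, huγ]
    · rintro (rfl | ⟨h1, h2⟩)
      · left; exact huγ
      · right
        refine ⟨h1, fun hc => h2 ?_⟩
        have : u' (u α) = u' (-(c.simple a)) := by rw [hc]
        rw [hu'u] at this
        rw [this, show u' (-(c.simple a)) = -(u' (c.simple a)) from c.wWord_neg _ _]
    
  by_cases hγ : γ ∈ c.pos
  · left
    refine ⟨hγ, ?_⟩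
    have hins : c.lamW (srefl (c.simple a) ∘ u) = insert γ (c.lamW u) := by
      rw [hfil]
      ext α
      simp only [Finset.mem_filter, Finset.mem_insert, lamW]
      constructor
      · rintro ⟨hαp, h | ⟨h1, _⟩⟩
        · exact Or.inl h
        · exact Or.inr ⟨hαp, h1⟩
      · rintro (rfl | ⟨hαp, h1⟩)
        · exact ⟨hγ, Or.inl rfl⟩
        · refine ⟨hαp, Or.inr ⟨h1, fun hc => ?_⟩⟩
          rw [hc] at hαp
          exact c.not_neg_mem_pos hγ hαp
    have hnotmem : γ ∉ c.lamW u := by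
      unfold lamW
      rw [Finset.mem_filter]
      rintro ⟨_, hmem⟩
      rw [huγ] at hmem
      exact c.not_neg_mem_pos (c.simple_pos a) hmem
    unfold lenW
    rw [hins, Finset.card_insert_of_notMem hnotmem]
  · right
    refine ⟨hγ, ?_⟩
    have hnγ : -γ ∈ c.pos := (c.mem_pos_or_neg hγR).resolve_left hγ
    have hers : c.lamW (srefl (c.simple a) ∘ u) = (c.lamW u).erase (-γ) := by
      rw [hfil]
      ext α
      simp only [Finset.mem_filter, Finset.mem_erase, lamW]
      constructor
      · rintro ⟨hαp, h | ⟨h1, h2⟩⟩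
        · exact absurd (h ▸ hαp) hγ
        · exact ⟨h2, hαp, h1⟩
      · rintro ⟨h2, hαp, h1⟩
        exact ⟨hαp, Or.inr ⟨h1, h2⟩⟩
    have hmem : -γ ∈ c.lamW u := by
      unfold lamW
      rw [Finset.mem_filter]
      refine ⟨hnγ, ?_⟩
      rw [show u (-γ) = -(u γ) from c.wWord_neg M γ, huγ, neg_neg]
      exact c.simple_pos a
    unfold lenW
    rw [hers, Finset.card_erase_of_mem hmem]
    have : 1 ≤ (c.lamW u).card := Finset.card_pos.mpr ⟨-γ, hmem⟩
    omega

lemma lenW_concat_le (M : List (Fin n)) (a : Fin n) :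
    c.lenW (c.wWord (M ++ [a])) ≤ c.lenW (c.wWord M) + 1 := by
  rw [c.wWord_concat]
  rcases c.lamW_step M a with ⟨_, h⟩ | ⟨_, h⟩ <;> omega

lemma lenW_append_le (N M : List (Fin n)) :
    c.lenW (c.wWord (N ++ M)) ≤ c.lenW (c.wWord N) + M.length := by
  induction M using List.reverseRecOn with
  | nil => simp
  | append_singleton M a ih =>
      rw [show N ++ (M ++ [a]) = (N ++ M) ++ [a] from (List.append_assoc N M [a]).symm]
      calc c.lenW (c.wWord ((N ++ M) ++ [a])) ≤ c.lenW (c.wWord (N ++ M)) + 1 :=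
            c.lenW_concat_le _ _
        _ ≤ c.lenW (c.wWord N) + M.length + 1 := by omega
        _ = c.lenW (c.wWord N) + (M ++ [a]).length := by
              rw [List.length_append]; simp; omega

lemma lenW_nil : c.lenW (c.wWord []) = 0 := by
  unfold lenW lamW
  rw [Finset.card_eq_zero, Finset.filter_eq_empty_iff]
  intro α hα
  show ¬ -(c.wWord [] α) ∈ c.pos
  exact c.not_neg_mem_pos hα

lemma lenW_le_length (M : List (Fin n)) : c.lenW (c.wWord M) ≤ M.length := by
  have h1 := c.lenW_append_le [] M
  have h2 := c.lenW_nil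
  simp only [List.nil_append] at h1
  omega

lemma lenW_take (L : List (Fin n)) (hred : L.length = c.lenW (c.wWord L)) (k : ℕ)
    (hk : k ≤ L.length) : c.lenW (c.wWord (L.take k)) = k := by
  have h1 : c.lenW (c.wWord (L.take k)) ≤ k := by
    have := c.lenW_le_length (L.take k)
    rwa [List.length_take, min_eq_left hk] at this
  have h2 := c.lenW_append_le (L.take k) (L.drop k)
  rw [List.take_append_drop, List.length_drop] at h2
  omega

lemma take_pos (L : List (Fin n)) (hred : L.length = c.lenW (c.wWord L)) (k : ℕ)
    (hk : k < L.length) :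
    c.wWord (L.take k).reverse (c.simple (L.get ⟨k, hk⟩)) ∈ c.pos := by
  have e : L.take k ++ [L.get ⟨k, hk⟩] = L.take (k + 1) := by
    have := List.take_concat_get hk
    simpa [List.concat_eq_append] using this
  rcases c.lamW_step (L.take k) (L.get ⟨k, hk⟩) with ⟨h, _⟩ | ⟨_, hl⟩
  · exact h
  · exfalso
    have h1 := c.lenW_take L hred k (le_of_lt hk)
    have h2 := c.lenW_take L hred (k + 1) hk
    rw [← e, c.wWord_concat] at h2
    omega

end RootCtx
namespace RootCtx

variable {n : ℕ} (c : RootCtx n)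

lemma srefl_hishort_eq_word {M : List (Fin n)} {a : Fin n}
    (h : c.wWord M c.hishort = c.simple a) :
    srefl c.hishort = c.wWord (M ++ a :: M.reverse) := by
  funext x
  rw [c.wWord_append, Function.comp_apply, c.wWord_cons, Function.comp_apply]
  have key : srefl (c.simple a) (c.wWord M x) = c.wWord M (srefl c.hishort x) := by
    show c.wWord M x - (2 * ⟪c.wWord M x, c.simple a⟫ / ⟪c.simple a, c.simple a⟫) •
        c.simple a = _
    rw [← h, c.wWord_inner M x c.hishort,
      c.wWord_inner M c.hishort c.hishort]
    show _ = c.wWord M (x - (2 * ⟪x, c.hishort⟫ / ⟪c.hishort, c.hishort⟫) • c.hishort)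
    rw [c.wWord_sub, c.wWord_smul]
  rw [key, c.wWord_reverse_apply]

end RootCtx
lemma pairing_arith (A B t na s : ℝ) (h1 : na ^ 2 = A) (h2 : 2 ≤ A)
    (h3 : t * A = 2 * B) (h4 : 2 ≤ t) (h5 : B ≤ s * na) (h6 : s ^ 2 = 2)
    (h7 : 0 < s) (h8 : 0 < na) : B = s * na ∧ na = s := by
  have hBA : A ≤ B := by nlinarith
  have hnas : na ≤ s := by
    by_contra hc
    push_neg at hc
    nlinarith [mul_pos (sub_pos.mpr hc) h8]
  have hA2 : A = 2 := by nlinarith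
  have hnaeq : na = s := by
    have hsn : s ≤ na := by nlinarith
    linarith
  constructor
  · have hle : B ≤ s * na := h5
    have hge : s * na ≤ B := by nlinarith
    linarith
  · exact hnaeq

open RootCtx in
/-- formula (1.33).  Let α_m be a short simple root and w the unique
element of minimal length (l(s_ϑ)−1)/2 with w(ϑ) = α_m, with a reduced word
L = [j_1,…,j_p] (letters in order of application).  Then for every k,
(s_{j_k}⋯s_{j_1}(ϑ), α_{j_k}^∨) = −1; equivalently (s_{j_{k+1}}⋯s_{j_p}(α_m), α_{j_k}^∨) = −1. -/
theorem minimal_word_pairing_neg_one {n : ℕ} (c : RootCtx n)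
    (m : Fin n) (hm : ⟪c.simple m, c.simple m⟫ = 2)
    (L : List (Fin n))
    (hw : c.wWord L c.hishort = c.simple m)
    (hred : L.length = c.lenW (c.wWord L))
    (hlen : 2 * L.length + 1 = c.lenW (srefl c.hishort))
    (hmin : ∀ v, c.IsWeyl v → v c.hishort = c.simple m →
      c.lenW (c.wWord L) ≤ c.lenW v) :
    ∀ k : Fin L.length,
      ⟪c.wWord (L.take (k + 1)) c.hishort, coroot (c.simple (L.get k))⟫ = -1 ∧
      ⟪c.wWord ((L.drop (k + 1)).reverse) (c.simple m), coroot (c.simple (L.get k))⟫ = -1 := by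
  intro k
  have hkp : (k : ℕ) < L.length := k.isLt
  set a := L.get k with ha
  have hAa2 : (2:ℝ) ≤ ⟪c.simple a, c.simple a⟫ := c.two_le_inner_self (c.simple_mem_R a)
  have hApos : (0:ℝ) < ⟪c.simple a, c.simple a⟫ := by linarith
  have hAne : (⟪c.simple a, c.simple a⟫ : ℝ) ≠ 0 := ne_of_gt hApos
  set β := c.wWord (L.take (k : ℕ)) c.hishort with hβ
  have hβR : β ∈ c.R := c.wWord_mem_R _ (c.pos_subset c.hishort_pos)
  have hβ2 : ⟪β, β⟫ = 2 := by rw [hβ, c.wWord_inner]; exact c.hishort_short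
  set t : ℝ := 2 * ⟪β, c.simple a⟫ / ⟪c.simple a, c.simple a⟫ with ht
  have hB : t * ⟪c.simple a, c.simple a⟫ = 2 * ⟪β, c.simple a⟫ := by
    rw [ht]; exact div_mul_cancel₀ _ hAne
  have hsr : srefl (c.simple a) β = β - t • c.simple a := rfl
  have htake : L.take ((k : ℕ) + 1) = L.take (k : ℕ) ++ [a] := by
    rw [ha, List.get_eq_getElem, ← List.take_concat_get hkp,
      List.concat_eq_append]
  have e1 : c.wWord (L.take ((k : ℕ) + 1)) c.hishort = srefl (c.simple a) β := by
    rw [htake, c.wWord_concat]; rfl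
  -- γ positive
  have hγpos : c.wWord (L.take (k : ℕ)).reverse (c.simple a) ∈ c.pos := by
    have h0 := c.take_pos L hred (k : ℕ) hkp
    rw [Fin.eta, ← ha] at h0
    exact h0
  -- t ≥ 0
  have hinner_eq : ⟪β, c.simple a⟫ =
      ⟪c.hishort, c.wWord (L.take (k : ℕ)).reverse (c.simple a)⟫ := by
    have h0 := c.wWord_inner (L.take (k : ℕ)) c.hishort
      (c.wWord (L.take (k : ℕ)).reverse (c.simple a))
    rw [c.wWord_apply_reverse] at h0
    exact h0
  have ht0 : 0 ≤ t := by
    rw [ht]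
    apply div_nonneg _ hApos.le
    have := c.pos_inner_theta_nonneg hγpos
    rw [← hinner_eq] at this
    linarith
  -- t is an integer
  obtain ⟨mz, hmz⟩ := c.crys (c.simple a) (c.simple_mem_R a) β hβR
  have htz : t = (mz : ℝ) := by rw [ht, hmz]
  -- t ≠ 0
  have htne : t ≠ 0 := by
    intro h0
    have hfix : srefl (c.simple a) β = β := by rw [hsr, h0, zero_smul, sub_zero]
    have hv : c.wWord (L.take (k : ℕ) ++ L.drop ((k : ℕ) + 1)) c.hishort = c.simple m := by
      rw [c.wWord_append, Function.comp_apply, ← hβ, ← hfix, ← e1,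
        ← Function.comp_apply (f := c.wWord (L.drop ((k : ℕ) + 1))),
        ← c.wWord_append, List.take_append_drop, hw]
    have hmin' := hmin _ ⟨_, rfl⟩ hv
    have hle := c.lenW_le_length (L.take (k : ℕ) ++ L.drop ((k : ℕ) + 1))
    have hlength : (L.take (k : ℕ) ++ L.drop ((k : ℕ) + 1)).length = L.length - 1 := by
      rw [List.length_append, List.length_take, List.length_drop]; omega
    omega
  -- t < 2
  have htlt : t < 2 := by
    by_contra hge
    push_neg at hge
    have hnβ : ‖β‖ = Real.sqrt 2 := by
      have h0 : ‖β‖ ^ 2 = 2 := by rw [← real_inner_self_eq_norm_sq]; exact hβ2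
      rw [← h0, Real.sqrt_sq (norm_nonneg β)]
    have hnα : ‖c.simple a‖ ^ 2 = ⟪c.simple a, c.simple a⟫ :=
      (real_inner_self_eq_norm_sq _).symm
    have hna0 : 0 < ‖c.simple a‖ := norm_pos_iff.mpr (c.simple_ne_zero a)
    have hs2 : Real.sqrt 2 ^ 2 = 2 := Real.sq_sqrt (by norm_num)
    have hs0 : 0 < Real.sqrt 2 := Real.sqrt_pos.mpr (by norm_num)
    have hCS : ⟪β, c.simple a⟫ ≤ ‖β‖ * ‖c.simple a‖ :=
      le_trans (le_abs_self _) (abs_real_inner_le_norm _ _)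
    rw [hnβ] at hCS
    obtain ⟨hBeq, hna⟩ := pairing_arith (⟪c.simple a, c.simple a⟫) (⟪β, c.simple a⟫)
      t (‖c.simple a‖) (Real.sqrt 2) hnα hAa2 hB hge hCS hs2 hs0 hna0
    have heq : ⟪β, c.simple a⟫ = ‖β‖ * ‖c.simple a‖ := by
      rw [hBeq, hnβ]
    have hsm := inner_eq_norm_mul_iff_real.mp heq
    rw [hna, hnβ] at hsm
    have hβa : β = c.simple a :=
      smul_right_injective (EV n) (ne_of_gt hs0) hsm
    have hword := c.srefl_hishort_eq_word (M := L.take (k : ℕ)) (a := a)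
      (by rw [← hβ]; exact hβa)
    have hle := c.lenW_le_length (L.take (k : ℕ) ++ a :: (L.take (k : ℕ)).reverse)
    rw [← hword] at hle
    have hlength : (L.take (k : ℕ) ++ a :: (L.take (k : ℕ)).reverse).length
        = 2 * (k : ℕ) + 1 := by
      simp [List.length_take]; omega
    omega
  -- t = 1
  have ht1 : t = 1 := by
    have h0 : 0 ≤ mz := by exact_mod_cast htz ▸ ht0
    have h1 : mz ≠ 0 := by
      intro hc; apply htne; rw [htz, hc]; norm_num
    have h2 : mz < 2 := by exact_mod_cast htz ▸ htlt
    have : mz = 1 := by omega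
    rw [htz, this]; norm_num
  -- conclusions
  have h2B : 2 * ⟪β, c.simple a⟫ = ⟪c.simple a, c.simple a⟫ := by
    rw [← hB, ht1, one_mul]
  have hval : ⟪β - t • c.simple a, coroot (c.simple a)⟫ = -1 := by
    rw [coroot, real_inner_smul_right, inner_sub_left, real_inner_smul_left, ht1, one_mul]
    rw [show ⟪β, c.simple a⟫ - ⟪c.simple a, c.simple a⟫
        = -(⟪c.simple a, c.simple a⟫ / 2) by linarith]
    have hgen : ∀ A : ℝ, A ≠ 0 → 2 / A * -(A / 2) = -1 := by
      intro A hA; field_simp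
    exact hgen _ hAne
  have e2 : c.wWord ((L.drop ((k : ℕ) + 1)).reverse) (c.simple m) = β - t • c.simple a := by
    have hdrop : c.wWord (L.drop ((k : ℕ) + 1)) (β - t • c.simple a) = c.simple m := by
      rw [← hsr, ← e1, ← Function.comp_apply (f := c.wWord (L.drop ((k : ℕ) + 1))),
        ← c.wWord_append, List.take_append_drop, hw]
    rw [← hdrop, c.wWord_reverse_apply]
  constructor
  · rw [e1, hsr]; exact hval
  · rw [e2]; exact hval
end
end

section
/- For every b ∈ P and 1 ≤ i ≤ n: if (b, α_i^∨) > 0 then T̄'_i(X_b) ≡ X_{s_i(b)} + X_b (mod Σ_+(b)); if (b, α_i^∨) = 0 then T̄'_i(X_b) = X_b; and if (b, α_i^∨) < 0 then T̄'_i(X_b) ≡ 0 (mod Σ_+(b)). -/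
open scoped RealInnerProductSpace Classical

noncomputable section

/-! ### The group algebra k[P] of the weight lattice, in coordinates with respect to
the fundamental weights, and the ingredients of the nil-affine Hecke operators. -/

/-- the weight lattice P in fundamental-weight coordinates. -/
abbrev WtLat (n : ℕ) := Fin n → ℤ

/-- the group algebra k[P], with basis X_b = `Xm k b`. -/
abbrev GA (k : Type) [CommRing k] (n : ℕ) := AddMonoidAlgebra k (WtLat n)

/-- the monomial X_b ∈ k[P]. -/
def Xm (k : Type) [CommRing k] {n : ℕ} (b : WtLat n) : GA k n :=
  AddMonoidAlgebra.single b 1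

variable {n : ℕ}

/-- the coordinates of the simple root α_i: (α_i)_j = (α_i, α_j^∨) = `cart j i`. -/
def aC (cart : Fin n → Fin n → ℤ) (i : Fin n) : WtLat n := fun j => cart j i

/-- the simple reflection s_i on the weight lattice: s_i(b) = b − (b,α_i^∨)·α_i. -/
def sC (cart : Fin n → Fin n → ℤ) (i : Fin n) (b : WtLat n) : WtLat n :=
  fun j => b j - b i * cart j i

/-- word in the simple reflections (letters in order of application). -/
def wordC (cart : Fin n → Fin n → ℤ) (L : List (Fin n)) : WtLat n → WtLat n :=
  L.foldl (fun f i => sC cart i ∘ f) id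

/-- membership in W (acting on the weight lattice). -/
def IsWC (cart : Fin n → Fin n → ℤ) (w : WtLat n → WtLat n) : Prop :=
  ∃ L, w = wordC cart L

/-- the Coxeter length. -/
def lenC (cart : Fin n → Fin n → ℤ) (w : WtLat n → WtLat n) : ℕ :=
  sInf {l | ∃ L : List (Fin n), L.length = l ∧ w = wordC cart L}

/-- antidominant weights. -/
def IsAntiC (b : WtLat n) : Prop := ∀ i, b i ≤ 0

/-- dominant weights. -/
def IsDomC (b : WtLat n) : Prop := ∀ i, 0 ≤ b i

/-- b < c, i.e. c − b ∈ Q₊ ∖ {0}. -/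
def latLt (cart : Fin n → Fin n → ℤ) (b c' : WtLat n) : Prop :=
  b ≠ c' ∧ ∃ f : Fin n → ℕ, ∀ j, c' j - b j = ∑ i, (f i : ℤ) * cart j i

/-- c' lies in the W-orbit of b. -/
def inOrb (cart : Fin n → Fin n → ℤ) (b c' : WtLat n) : Prop :=
  ∃ w, IsWC cart w ∧ c' = w b

/-- Σ₊(b): the span of the monomials X_c with b₋ < c₋. -/
def SigmaPlus (k : Type) [CommRing k] (cart : Fin n → Fin n → ℤ) (b : WtLat n) :
    Submodule k (GA k n) :=
  Submodule.span k
    {x | ∃ cc bm cm : WtLat n, inOrb cart b bm ∧ IsAntiC bm ∧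
      inOrb cart cc cm ∧ IsAntiC cm ∧ latLt cart bm cm ∧ x = Xm k cc}

/-- the Bruhat order on W, via the subword property. -/
def BruhatLe (cart : Fin n → Fin n → ℤ) (v w : WtLat n → WtLat n) : Prop :=
  ∃ Lw Lv : List (Fin n), wordC cart Lw = w ∧ Lw.length = lenC cart w ∧
    Lv.Sublist Lw ∧ wordC cart Lv = v

section NilAux

open Finset

variable {n : ℕ}

lemma srefl_add (a x y : EV n) : srefl a (x + y) = srefl a x + srefl a y := by
  unfold srefl
  rw [inner_add_left, show (2*(⟪x,a⟫+⟪y,a⟫)/⟪a,a⟫) = 2*⟪x,a⟫/⟪a,a⟫ + 2*⟪y,a⟫/⟪a,a⟫ by ring,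
    add_smul]
  abel

lemma srefl_smul (a : EV n) (r : ℝ) (x : EV n) : srefl a (r • x) = r • srefl a x := by
  unfold srefl
  rw [real_inner_smul_left, show (2*(r*⟪x,a⟫)/⟪a,a⟫) = r * (2*⟪x,a⟫/⟪a,a⟫) by ring,
    smul_sub, smul_smul]

lemma srefl_sub (a x y : EV n) : srefl a (x - y) = srefl a x - srefl a y := by
  rw [eq_sub_iff_add_eq, ← srefl_add, sub_add_cancel]

lemma srefl_inner_self (a x : EV n) : ⟪srefl a x, srefl a x⟫ = ⟪x, x⟫ := by
  rcases eq_or_ne a 0 with h | h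
  · simp [srefl, h]
  · have haa : ⟪a,a⟫ ≠ 0 := fun hh => h (inner_self_eq_zero.mp hh)
    unfold srefl
    rw [inner_sub_left, inner_sub_right, inner_sub_right, real_inner_smul_left,
      real_inner_smul_left, real_inner_smul_right, real_inner_smul_right,
      real_inner_comm a x, div_mul_cancel₀ _ haa]
    ring

lemma srefl_norm (a x : EV n) : ‖srefl a x‖ = ‖x‖ := by
  have h := srefl_inner_self a x
  rw [real_inner_self_eq_norm_sq, real_inner_self_eq_norm_sq] at h
  calc ‖srefl a x‖ = Real.sqrt (‖srefl a x‖^2) := (Real.sqrt_sq (norm_nonneg _)).symm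
    _ = Real.sqrt (‖x‖^2) := by rw [h]
    _ = ‖x‖ := Real.sqrt_sq (norm_nonneg _)

end NilAux
section NilGeom

open Finset

variable {n : ℕ} (c : RootCtx n)

lemma simple_mem_R (i : Fin n) : c.simple i ∈ c.R := c.pos_subset (c.simple_pos i)

lemma simple_ne (i : Fin n) : c.simple i ≠ 0 := c.nonzero _ (simple_mem_R c i)

lemma simple_inner_pos (i : Fin n) : 0 < ⟪c.simple i, c.simple i⟫ := by
  have h1 : ⟪c.simple i, c.simple i⟫ ≠ 0 :=
    fun h => simple_ne c i (inner_self_eq_zero.mp h)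
  exact lt_of_le_of_ne real_inner_self_nonneg (Ne.symm h1)

lemma pos_or_neg {α : EV n} (h : α ∈ c.R) : α ∈ c.pos ∨ -α ∈ c.pos := by
  by_cases hp : α ∈ c.pos
  · exact Or.inl hp
  · right
    by_contra hn
    exact hp ((c.pos_iff α h).mpr hn)

lemma span_simple : ⊤ ≤ Submodule.span ℝ (Set.range c.simple) := by
  rw [← c.span_top]
  apply Submodule.span_le.mpr
  intro α hα
  rcases pos_or_neg c (by simpa using hα) with hp | hp
  · obtain ⟨f, hf⟩ := c.pos_sum α hp
    rw [hf]
    exact Submodule.sum_mem _ fun i _ =>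
      Submodule.smul_mem _ _ (Submodule.subset_span (Set.mem_range_self i))
  · obtain ⟨f, hf⟩ := c.pos_sum _ hp
    have : α = -∑ i, (f i : ℝ) • c.simple i := by rw [← hf]; simp
    rw [this]
    exact Submodule.neg_mem _ (Submodule.sum_mem _ fun i _ =>
      Submodule.smul_mem _ _ (Submodule.subset_span (Set.mem_range_self i)))

/-- coordinates x ↦ (⟪α_j, x⟫)_j -/
def Gmap : EV n →ₗ[ℝ] (Fin n → ℝ) where
  toFun x := fun j => ⟪c.simple j, x⟫
  map_add' x y := by funext j; exact inner_add_right _ _ _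
  map_smul' r x := by
    funext j
    show ⟪c.simple j, r • x⟫ = r * ⟪c.simple j, x⟫
    exact real_inner_smul_right _ _ _

lemma Gmap_inj : Function.Injective (Gmap c) := by
  rw [← LinearMap.ker_eq_bot]
  apply (Submodule.eq_bot_iff _).mpr
  intro x hx
  have hx' : ∀ j, ⟪c.simple j, x⟫ = 0 := fun j => congrFun (LinearMap.mem_ker.mp hx) j
  have hxx : ⟪x, x⟫ = 0 := by
    have hmem : x ∈ Submodule.span ℝ (Set.range c.simple) := span_simple c Submodule.mem_top
    refine Submodule.span_induction (p := fun y _ => ⟪y, x⟫ = (0:ℝ)) ?_ ?_ ?_ ?_ hmem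
    · rintro y ⟨j, rfl⟩; exact hx' j
    · exact inner_zero_left x
    · intro y z _ _ hy hz; rw [inner_add_left, hy, hz, add_zero]
    · intro r y _ hy; rw [real_inner_smul_left, hy, mul_zero]
  exact inner_self_eq_zero.mp hxx

lemma Gmap_surj : Function.Surjective (Gmap c) := by
  rw [← LinearMap.range_eq_top]
  apply Submodule.eq_top_of_finrank_eq
  rw [LinearMap.finrank_range_of_inj (Gmap_inj c)]
  simp [finrank_euclideanSpace_fin]

/-- the coordinate equivalence -/
def Geq : EV n ≃ₗ[ℝ] (Fin n → ℝ) :=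
  LinearEquiv.ofBijective (Gmap c) ⟨Gmap_inj c, Gmap_surj c⟩

/-- the inverse coordinate map, suitably rescaled -/
def Phi (r : Fin n → ℝ) : EV n :=
  (Geq c).symm (fun j => r j * (⟪c.simple j, c.simple j⟫ / 2))

/-- coroot-coordinates -/
def Psi (x : EV n) : Fin n → ℝ :=
  fun j => 2 * ⟪c.simple j, x⟫ / ⟪c.simple j, c.simple j⟫

lemma Psi_inj {x y : EV n} (h : Psi c x = Psi c y) : x = y := by
  apply Gmap_inj c
  funext j
  have hj := congrFun h j
  unfold Psi at hj
  have hpos := simple_inner_pos c j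
  show ⟪c.simple j, x⟫ = ⟪c.simple j, y⟫
  have hq : ⟪c.simple j, c.simple j⟫ ≠ 0 := ne_of_gt hpos
  have h2 := congrArg (· * ⟪c.simple j, c.simple j⟫) hj
  simp only [div_mul_cancel₀ _ hq] at h2
  linarith

lemma Psi_Phi (r : Fin n → ℝ) : Psi c (Phi c r) = r := by
  funext j
  have h : Gmap c (Phi c r) = fun j => r j * (⟪c.simple j, c.simple j⟫ / 2) := by
    show Gmap c ((Geq c).symm _) = _
    exact (Geq c).apply_symm_apply _
  have hj : ⟪c.simple j, Phi c r⟫ = r j * (⟪c.simple j, c.simple j⟫ / 2) := congrFun h j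
  unfold Psi
  rw [hj]
  have hpos := simple_inner_pos c j
  rw [div_eq_iff (ne_of_gt hpos)]
  ring

lemma Psi_add (x y : EV n) (j : Fin n) : Psi c (x + y) j = Psi c x j + Psi c y j := by
  unfold Psi; rw [inner_add_right]; ring

lemma Psi_sub (x y : EV n) (j : Fin n) : Psi c (x - y) j = Psi c x j - Psi c y j := by
  unfold Psi; rw [inner_sub_right]; ring

lemma Psi_smul (r : ℝ) (x : EV n) (j : Fin n) : Psi c (r • x) j = r * Psi c x j := by
  unfold Psi; rw [real_inner_smul_right]; ring

lemma Psi_neg (x : EV n) (j : Fin n) : Psi c (-x) j = -Psi c x j := by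
  unfold Psi; rw [inner_neg_right]; ring

lemma Psi_sum {ι : Type*} (s : Finset ι) (g : ι → EV n) (j : Fin n) :
    Psi c (∑ i ∈ s, g i) j = ∑ i ∈ s, Psi c (g i) j := by
  unfold Psi
  rw [inner_sum]
  rw [Finset.mul_sum, Finset.sum_div]

end NilGeom
section NilWords

open Finset

variable {n : ℕ}

lemma wordC_foldl_apply (cart : Fin n → Fin n → ℤ) (L : List (Fin n))
    (g : WtLat n → WtLat n) (b : WtLat n) :
    (L.foldl (fun f i => sC cart i ∘ f) g) b = wordC cart L (g b) := by
  induction L generalizing g b with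
  | nil => rfl
  | cons j L ih =>
      show (L.foldl (fun f i => sC cart i ∘ f) (sC cart j ∘ g)) b
        = (L.foldl (fun f i => sC cart i ∘ f) (sC cart j ∘ id)) (g b)
      rw [ih, ih]
      rfl

lemma wordC_cons (cart : Fin n → Fin n → ℤ) (i : Fin n) (L : List (Fin n)) (b : WtLat n) :
    wordC cart (i :: L) b = wordC cart L (sC cart i b) := by
  show (L.foldl (fun f i => sC cart i ∘ f) (sC cart i ∘ id)) b = _
  rw [wordC_foldl_apply]
  rfl

lemma wordC_append (cart : Fin n → Fin n → ℤ) (L₁ L₂ : List (Fin n)) (b : WtLat n) :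
    wordC cart (L₁ ++ L₂) b = wordC cart L₂ (wordC cart L₁ b) := by
  unfold wordC
  rw [List.foldl_append]
  rw [wordC_foldl_apply]
  rfl

lemma inOrb_wordC (cart : Fin n → Fin n → ℤ) (L : List (Fin n)) (b : WtLat n) :
    inOrb cart b (wordC cart L b) :=
  ⟨wordC cart L, ⟨L, rfl⟩, rfl⟩

lemma wWord_cons (c : RootCtx n) (i : Fin n) (L : List (Fin n)) (x : EV n) :
    c.wWord (i :: L) x = c.wWord L (srefl (c.simple i) x) := by
  have H : ∀ (L : List (Fin n)) (g : EV n → EV n) (x : EV n),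
      (L.foldl (fun f i => srefl (c.simple i) ∘ f) g) x = c.wWord L (g x) := by
    intro L
    induction L with
    | nil => intro g x; rfl
    | cons j L ih =>
        intro g x
        show (L.foldl _ (srefl (c.simple j) ∘ g)) x = _
        rw [ih]
        show _ = (L.foldl _ (srefl (c.simple j) ∘ id)) (g x)
        rw [ih]
        rfl
  show (L.foldl (fun f i => srefl (c.simple i) ∘ f) (srefl (c.simple i) ∘ id)) x = _
  rw [H]
  rfl

lemma wWord_add (c : RootCtx n) (L : List (Fin n)) (x y : EV n) :
    c.wWord L (x + y) = c.wWord L x + c.wWord L y := by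
  induction L generalizing x y with
  | nil => rfl
  | cons j L ih => rw [wWord_cons, wWord_cons, wWord_cons, srefl_add, ih]

lemma wWord_smul (c : RootCtx n) (L : List (Fin n)) (r : ℝ) (x : EV n) :
    c.wWord L (r • x) = r • c.wWord L x := by
  induction L generalizing x with
  | nil => rfl
  | cons j L ih => rw [wWord_cons, wWord_cons, srefl_smul, ih]

lemma wWord_norm (c : RootCtx n) (L : List (Fin n)) (x : EV n) :
    ‖c.wWord L x‖ = ‖x‖ := by
  induction L generalizing x with
  | nil => rfl
  | cons j L ih => rw [wWord_cons, ih, srefl_norm]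

lemma wWord_mem_R (c : RootCtx n) (L : List (Fin n)) {α : EV n} (h : α ∈ c.R) :
    c.wWord L α ∈ c.R := by
  induction L generalizing α with
  | nil => exact h
  | cons j L ih =>
      rw [wWord_cons]
      exact ih (c.reflect_mem _ (simple_mem_R c j) _ h)

end NilWords

section NilPhiL

open Finset

variable {n : ℕ} (c : RootCtx n) (cart : Fin n → Fin n → ℤ)

/-- the real vector attached to a lattice weight -/
def phiL (b : WtLat n) : EV n := Phi c (fun j => (b j : ℝ))

lemma Psi_phiL (b : WtLat n) (j : Fin n) : Psi c (phiL c b) j = (b j : ℝ) := by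
  unfold phiL
  rw [Psi_Phi]

lemma phiL_inj {b b' : WtLat n} (h : phiL c b = phiL c b') : b = b' := by
  funext j
  have := congrArg (fun x => Psi c x j) h
  simp only [Psi_phiL] at this
  exact_mod_cast this

lemma Psi_simple (hcart : ∀ i j, (cart i j : ℝ)
      = 2 * ⟪c.simple j, c.simple i⟫ / ⟪c.simple i, c.simple i⟫) (i j : Fin n) : Psi c (c.simple i) j = (cart j i : ℝ) := by
  rw [hcart j i]
  unfold Psi
  rw [real_inner_comm]

lemma phiL_sC (hcart : ∀ i j, (cart i j : ℝ)
      = 2 * ⟪c.simple j, c.simple i⟫ / ⟪c.simple i, c.simple i⟫) (i : Fin n) (b : WtLat n) :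
    phiL c (sC cart i b) = srefl (c.simple i) (phiL c b) := by
  apply Psi_inj c
  funext j
  have hsr : srefl (c.simple i) (phiL c b)
      = phiL c b - (Psi c (phiL c b) i) • c.simple i := by
    unfold srefl Psi
    rw [real_inner_comm]
  rw [hsr, Psi_sub, Psi_smul, Psi_simple c cart hcart]
  simp only [Psi_phiL]
  show ((sC cart i b) j : ℝ) = _
  unfold sC
  push_cast
  ring

lemma phiL_wordC (hcart : ∀ i j, (cart i j : ℝ)
      = 2 * ⟪c.simple j, c.simple i⟫ / ⟪c.simple i, c.simple i⟫) (L : List (Fin n)) (b : WtLat n) :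
    phiL c (wordC cart L b) = c.wWord L (phiL c b) := by
  induction L generalizing b with
  | nil => rfl
  | cons j L ih => rw [wordC_cons, wWord_cons, ih, phiL_sC c cart hcart]

lemma norm_phiL_wordC (hcart : ∀ i j, (cart i j : ℝ)
      = 2 * ⟪c.simple j, c.simple i⟫ / ⟪c.simple i, c.simple i⟫) (L : List (Fin n)) (b : WtLat n) :
    ‖phiL c (wordC cart L b)‖ = ‖phiL c b‖ := by
  rw [phiL_wordC c cart hcart, wWord_norm]

/-- the strictly dominant reference vector -/
def vv : EV n := Phi c (fun _ => 1)

lemma inner_simple_vv (j : Fin n) : ⟪c.simple j, vv c⟫ = ⟪c.simple j, c.simple j⟫ / 2 := by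
  have h0 := congrFun (Psi_Phi c (fun _ => 1)) j
  have hq : ⟪c.simple j, c.simple j⟫ ≠ 0 := ne_of_gt (simple_inner_pos c j)
  have h : 2 * ⟪c.simple j, vv c⟫ / ⟪c.simple j, c.simple j⟫ = 1 := h0
  have h2 := congrArg (· * ⟪c.simple j, c.simple j⟫) h
  simp only [div_mul_cancel₀ _ hq, one_mul] at h2
  linarith

lemma inner_simple_vv_pos (j : Fin n) : 0 < ⟪c.simple j, vv c⟫ := by
  rw [inner_simple_vv]
  have := simple_inner_pos c j
  linarith

lemma pos_inner_vv_pos {β : EV n} (h : β ∈ c.pos) : 0 < ⟪β, vv c⟫ := by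
  obtain ⟨f, hf⟩ := c.pos_sum β h
  have hβ0 : β ≠ 0 := c.nonzero β (c.pos_subset h)
  have hex : ∃ i, f i ≠ 0 := by
    by_contra hno
    push_neg at hno
    apply hβ0
    rw [hf]
    simp [hno]
  rw [hf, sum_inner]
  obtain ⟨i0, hi0⟩ := hex
  apply Finset.sum_pos'
  · intro i _
    rw [real_inner_smul_left]
    have := inner_simple_vv_pos c i
    positivity
  · refine ⟨i0, Finset.mem_univ _, ?_⟩
    rw [real_inner_smul_left]
    have h1 := inner_simple_vv_pos c i0
    have h2 : (0:ℝ) < (f i0 : ℝ) := by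
      have := Nat.pos_of_ne_zero hi0
      exact_mod_cast this
    positivity

end NilPhiL
section NilDescent

open Finset

variable {n : ℕ}

lemma phiL_sC' (c : RootCtx n) (cart : Fin n → Fin n → ℤ)
    (hcart : ∀ i j, (cart i j : ℝ)
      = 2 * ⟪c.simple j, c.simple i⟫ / ⟪c.simple i, c.simple i⟫) (i : Fin n) (b : WtLat n) :
    phiL c (sC cart i b) = phiL c b - (b i : ℝ) • c.simple i := by
  rw [phiL_sC c cart hcart]
  unfold srefl
  rw [real_inner_comm]
  rw [show 2 * ⟪c.simple i, phiL c b⟫ / ⟪c.simple i, c.simple i⟫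
      = Psi c (phiL c b) i from rfl, Psi_phiL]

lemma descent (c : RootCtx n) (cart : Fin n → Fin n → ℤ)
    (hcart : ∀ i j, (cart i j : ℝ)
      = 2 * ⟪c.simple j, c.simple i⟫ / ⟪c.simple i, c.simple i⟫) (b0 : WtLat n) :
    ∃ (L : List (Fin n)) (f : Fin n → ℕ), IsAntiC (wordC cart L b0) ∧
      ∀ l, b0 l - wordC cart L b0 l = ∑ i, (f i : ℤ) * cart l i := by
  classical
  set r := ‖phiL c b0‖ with hr
  obtain ⟨K, hK⟩ := exists_nat_ge
    (∑ l : Fin n, max 0 (2 * r * ‖c.simple l‖ / ⟪c.simple l, c.simple l⟫))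
  have hKl : ∀ l : Fin n, 2 * r * ‖c.simple l‖ / ⟪c.simple l, c.simple l⟫ ≤ K := by
    intro l
    calc 2 * r * ‖c.simple l‖ / ⟪c.simple l, c.simple l⟫
        ≤ max 0 (2 * r * ‖c.simple l‖ / ⟪c.simple l, c.simple l⟫) := le_max_right _ _
      _ ≤ ∑ l : Fin n, max 0 (2 * r * ‖c.simple l‖ / ⟪c.simple l, c.simple l⟫) :=
          Finset.single_le_sum (f := fun l => max 0 (2 * r * ‖c.simple l‖ / ⟪c.simple l, c.simple l⟫)) (fun i _ => le_max_left _ _) (mem_univ l)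
      _ ≤ K := hK
  set S : Finset (WtLat n) := Fintype.piFinset (fun _ => Finset.Icc (-(K:ℤ)) (K:ℤ)) with hS
  have hmemS : ∀ b : WtLat n, ‖phiL c b‖ = r → b ∈ S := by
    intro b hb
    rw [hS, Fintype.mem_piFinset]
    intro l
    rw [Finset.mem_Icc]
    have hq := simple_inner_pos c l
    have h1 : |(b l : ℝ)| ≤ K := by
      have h2 : (b l : ℝ) = Psi c (phiL c b) l := (Psi_phiL c b l).symm
      rw [h2]
      unfold Psi
      have habs : |2 * ⟪c.simple l, phiL c b⟫ / ⟪c.simple l, c.simple l⟫|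
          = 2 * |⟪c.simple l, phiL c b⟫| / ⟪c.simple l, c.simple l⟫ := by
        rw [abs_div, abs_of_pos hq, abs_mul, abs_two]
      rw [abs_le]
      rw [← abs_le (a := 2 * ⟪c.simple l, phiL c b⟫ / ⟪c.simple l, c.simple l⟫)]
      rw [habs]
      have hCS : |⟪c.simple l, phiL c b⟫| ≤ ‖c.simple l‖ * r := by
        rw [← hb]
        exact abs_real_inner_le_norm _ _
      calc 2 * |⟪c.simple l, phiL c b⟫| / ⟪c.simple l, c.simple l⟫
          ≤ 2 * (‖c.simple l‖ * r) / ⟪c.simple l, c.simple l⟫ := by gcongr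
        _ = 2 * r * ‖c.simple l‖ / ⟪c.simple l, c.simple l⟫ := by ring
        _ ≤ K := hKl l
    constructor
    · have := (abs_le.mp h1).1
      exact_mod_cast this
    · have := (abs_le.mp h1).2
      exact_mod_cast this
  set mu : WtLat n → ℕ :=
    fun b => (S.filter (fun z => ⟪phiL c z, vv c⟫ < ⟪phiL c b, vv c⟫)).card with hmu
  suffices H : ∀ (N : ℕ) (b : WtLat n), ‖phiL c b‖ = r → mu b < N →
      ∃ (L : List (Fin n)) (f : Fin n → ℕ), IsAntiC (wordC cart L b) ∧
        ∀ l, b l - wordC cart L b l = ∑ i, (f i : ℤ) * cart l i by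
    exact H (mu b0 + 1) b0 rfl (Nat.lt_succ_self _)
  intro N
  induction N with
  | zero => exact fun b _ h => absurd h (Nat.not_lt_zero _)
  | succ N ih =>
      intro b hb hN
      by_cases hA : IsAntiC b
      · exact ⟨[], fun _ => 0, hA, fun l => by rw [show wordC cart [] b = b from rfl]; simp⟩
      · have hex : ∃ i, 0 < b i := by
          unfold IsAntiC at hA
          push_neg at hA
          obtain ⟨i, hi⟩ := hA
          exact ⟨i, hi⟩
        obtain ⟨i, hi⟩ := hex
        have hφ := phiL_sC' c cart hcart i b
        have hnorm : ‖phiL c (sC cart i b)‖ = r := by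
          rw [phiL_sC c cart hcart, srefl_norm, hb]
        have hlt : ⟪phiL c (sC cart i b), vv c⟫ < ⟪phiL c b, vv c⟫ := by
          rw [hφ, inner_sub_left, real_inner_smul_left]
          have h1 := inner_simple_vv_pos c i
          have h2 : (0:ℝ) < (b i : ℝ) := by exact_mod_cast hi
          nlinarith
        have hmulat : mu (sC cart i b) < mu b := by
          apply Finset.card_lt_card
          rw [Finset.ssubset_iff_of_subset]
          · exact ⟨sC cart i b, Finset.mem_filter.mpr ⟨hmemS _ hnorm, hlt⟩,
              fun hmem => lt_irrefl _ (Finset.mem_filter.mp hmem).2⟩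
          · intro z hz
            rw [Finset.mem_filter] at hz ⊢
            exact ⟨hz.1, lt_trans hz.2 hlt⟩
        obtain ⟨L, f, h1, h2⟩ := ih (sC cart i b) hnorm (by omega)
        refine ⟨i :: L, fun l' => (if l' = i then (b i).toNat else 0) + f l', ?_, ?_⟩
        · rw [wordC_cons]; exact h1
        · intro l
          rw [wordC_cons]
          have h3 := h2 l
          have hstep : b l - sC cart i b l = b i * cart l i := by unfold sC; ring
          have hsum : ∑ i', ((((if i' = i then (b i).toNat else 0) + f i' : ℕ)) : ℤ) * cart l i'
              = b i * cart l i + ∑ i', (f i' : ℤ) * cart l i' := by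
            push_cast
            simp only [add_mul, Finset.sum_add_distrib]
            congr 1
            simp only [ite_mul, zero_mul]
            rw [Finset.sum_ite_eq' Finset.univ i (fun i' => ((b i).toNat : ℤ) * cart l i')]
            simp [Int.toNat_of_nonneg hi.le]
          rw [hsum]
          omega

section NilKey

open Finset

variable {n : ℕ}

lemma smul_helper (A B : EV n) (x y : ℝ) : (A + (-x) • B) + (x - y) • B = A - y • B := by
  rw [add_assoc, ← add_smul, show -x + (x - y) = -y by ring, neg_smul, ← sub_eq_add_neg]

lemma cart_diag (c : RootCtx n) (cart : Fin n → Fin n → ℤ)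
    (hcart : ∀ i j, (cart i j : ℝ)
      = 2 * ⟪c.simple j, c.simple i⟫ / ⟪c.simple i, c.simple i⟫) (i : Fin n) :
    cart i i = 2 := by
  have hq := simple_inner_pos c i
  have h2 : (cart i i : ℝ) = 2 := by
    rw [hcart i i, mul_div_assoc, div_self (ne_of_gt hq), mul_one]
  exact_mod_cast h2

lemma sC_invol (c : RootCtx n) (cart : Fin n → Fin n → ℤ)
    (hcart : ∀ i j, (cart i j : ℝ)
      = 2 * ⟪c.simple j, c.simple i⟫ / ⟪c.simple i, c.simple i⟫) (i : Fin n) (b : WtLat n) :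
    sC cart i (sC cart i b) = b := by
  funext l
  unfold sC
  rw [cart_diag c cart hcart i]
  ring

lemma inOrb_sC_iff (c : RootCtx n) (cart : Fin n → Fin n → ℤ)
    (hcart : ∀ i j, (cart i j : ℝ)
      = 2 * ⟪c.simple j, c.simple i⟫ / ⟪c.simple i, c.simple i⟫) (i : Fin n)
    (b y : WtLat n) : inOrb cart (sC cart i b) y ↔ inOrb cart b y := by
  constructor
  · rintro ⟨w, ⟨L, rfl⟩, rfl⟩
    exact ⟨wordC cart (i :: L), ⟨i :: L, rfl⟩, (wordC_cons cart i L b).symm⟩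
  · rintro ⟨w, ⟨L, rfl⟩, rfl⟩
    refine ⟨wordC cart (i :: L), ⟨i :: L, rfl⟩, ?_⟩
    rw [wordC_cons, sC_invol c cart hcart]

lemma SigmaPlus_sC (k : Type) [Field k] (c : RootCtx n) (cart : Fin n → Fin n → ℤ)
    (hcart : ∀ i j, (cart i j : ℝ)
      = 2 * ⟪c.simple j, c.simple i⟫ / ⟪c.simple i, c.simple i⟫) (i : Fin n) (b : WtLat n) :
    SigmaPlus k cart (sC cart i b) = SigmaPlus k cart b := by
  unfold SigmaPlus
  congr 1
  ext x
  simp only [Set.mem_setOf_eq]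
  constructor <;> rintro ⟨cc, bm, cm, h1, h⟩
  · exact ⟨cc, bm, cm, (inOrb_sC_iff c cart hcart i b bm).1 h1, h⟩
  · exact ⟨cc, bm, cm, (inOrb_sC_iff c cart hcart i b bm).2 h1, h⟩

lemma sigma_helper (k : Type) [Field k] (c : RootCtx n) (cart : Fin n → Fin n → ℤ)
    (hcart : ∀ i j, (cart i j : ℝ)
      = 2 * ⟪c.simple j, c.simple i⟫ / ⟪c.simple i, c.simple i⟫)
    (b cc : WtLat n) (Lz Lc : List (Fin n)) (p : ℤ) (β : EV n)
    (hanti : IsAntiC (wordC cart Lc cc))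
    (hp : 0 < p) (hβ : β ∈ c.pos)
    (heq : phiL c (wordC cart Lc cc) = phiL c (wordC cart Lz b) + (p : ℝ) • β) :
    Xm k cc ∈ SigmaPlus k cart b := by
  classical
  set cm := wordC cart Lc cc with hcm
  set z := wordC cart Lz b with hz
  obtain ⟨L₂, f₂, hbm_anti, hbm_coord⟩ := descent c cart hcart z
  set bm := wordC cart L₂ z with hbm
  obtain ⟨g, hg⟩ := c.pos_sum β hβ
  have hβcoord : ∀ l, Psi c β l = ∑ i, (g i : ℝ) * (cart l i : ℝ) := by
    intro l
    rw [hg, Psi_sum]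
    exact Finset.sum_congr rfl fun i _ => by
      rw [Psi_smul, Psi_simple c cart hcart]
  have hcmz : ∀ l, cm l - z l = p * ∑ i, (g i : ℤ) * cart l i := by
    intro l
    have h2 : (cm l : ℝ) - (z l : ℝ) = (p:ℝ) * ∑ i, (g i : ℝ) * (cart l i : ℝ) := by
      have e1 : (cm l : ℝ) = Psi c (phiL c cm) l := (Psi_phiL c cm l).symm
      have e2 : (z l : ℝ) = Psi c (phiL c z) l := (Psi_phiL c z l).symm
      rw [e1, e2, heq]
      rw [show ∀ x y : EV n, Psi c (x + y) l = Psi c x l + Psi c y l from fun x y => Psi_add c x y l]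
      rw [Psi_smul, hβcoord]
      ring
    exact_mod_cast h2
  have hzbm : phiL c z - phiL c bm = ∑ i, (f₂ i : ℝ) • c.simple i := by
    apply Psi_inj c
    funext l
    rw [Psi_sub, Psi_phiL, Psi_phiL, Psi_sum]
    rw [Finset.sum_congr rfl (fun i _ => by rw [Psi_smul, Psi_simple c cart hcart])]
    have h3 := hbm_coord l
    exact_mod_cast h3
  have hlt : latLt cart bm cm := by
    refine ⟨?_, fun i => f₂ i + p.toNat * g i, ?_⟩
    · intro hbc
      have hv : 0 < ⟪phiL c cm - phiL c bm, vv c⟫ := by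
        have hsplit : phiL c cm - phiL c bm = (p:ℝ) • β + (phiL c z - phiL c bm) := by
          rw [heq]; abel
        rw [hsplit, inner_add_left, real_inner_smul_left, hzbm, sum_inner]
        have hβv := pos_inner_vv_pos c hβ
        have hp' : (0:ℝ) < p := by exact_mod_cast hp
        have hsum : 0 ≤ ∑ i, ⟪(f₂ i:ℝ) • c.simple i, vv c⟫ := by
          apply Finset.sum_nonneg
          intro i _
          rw [real_inner_smul_left]
          have := inner_simple_vv_pos c i
          positivity
        nlinarith
      rw [hbc] at hv
      simp at hv
    · intro l
      have e1 := hcmz l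
      have e2 := hbm_coord l
      have htn : ((p.toNat : ℤ)) = p := Int.toNat_of_nonneg hp.le
      have e3 : ∑ i, ((f₂ i + p.toNat * g i : ℕ) : ℤ) * cart l i
          = (∑ i, (f₂ i:ℤ) * cart l i) + p * ∑ i, (g i:ℤ) * cart l i := by
        rw [Finset.mul_sum, ← Finset.sum_add_distrib]
        apply Finset.sum_congr rfl
        intro i _
        push_cast [htn]
        ring
      rw [e3]
      omega
  apply Submodule.subset_span
  refine ⟨cc, bm, cm, ⟨wordC cart (Lz ++ L₂), ⟨Lz ++ L₂, rfl⟩, ?_⟩, hbm_anti,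
    ⟨wordC cart Lc, ⟨Lc, rfl⟩, hcm⟩, hanti, hlt, rfl⟩
  rw [wordC_append, ← hz, ← hbm]

lemma key_lemma (k : Type) [Field k] (c : RootCtx n) (cart : Fin n → Fin n → ℤ)
    (hcart : ∀ i j, (cart i j : ℝ)
      = 2 * ⟪c.simple j, c.simple i⟫ / ⟪c.simple i, c.simple i⟫)
    (b : WtLat n) (i : Fin n) (j : ℤ) (h0 : 0 < j) (hm : j < b i) :
    Xm k (b - j • aC cart i) ∈ SigmaPlus k cart b := by
  classical
  set cc : WtLat n := b - j • aC cart i with hcc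
  obtain ⟨Lc, g0, hanti, _⟩ := descent c cart hcart cc
  have hccreal : phiL c cc = phiL c b - (j:ℝ) • c.simple i := by
    apply Psi_inj c
    funext l
    rw [Psi_sub, Psi_smul, Psi_simple c cart hcart]
    simp only [Psi_phiL]
    rw [hcc]
    show ((b l - j * cart l i : ℤ) : ℝ) = _
    push_cast
    ring
  have hcm : phiL c (wordC cart Lc cc)
      = c.wWord Lc (phiL c b) - (j:ℝ) • c.wWord Lc (c.simple i) := by
    rw [phiL_wordC c cart hcart, hccreal, sub_eq_add_neg, ← neg_smul,
      wWord_add, wWord_smul, neg_smul, ← sub_eq_add_neg]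
  have hβR : c.wWord Lc (c.simple i) ∈ c.R := wWord_mem_R c Lc (simple_mem_R c i)
  rcases pos_or_neg c hβR with hposβ | hnegβ
  · have hid : phiL c (wordC cart Lc cc)
        = phiL c (wordC cart (i :: Lc) b) + ((b i - j : ℤ):ℝ) • (c.wWord Lc (c.simple i)) := by
      have hcast : ((b i - j : ℤ):ℝ) = (b i : ℝ) - (j:ℝ) := by push_cast; ring
      rw [hcm, hcast, wordC_cons, phiL_wordC c cart hcart, phiL_sC' c cart hcart,
        sub_eq_add_neg (phiL c b), ← neg_smul, wWord_add, wWord_smul, smul_helper]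
    exact sigma_helper k c cart hcart b cc (i :: Lc) Lc (b i - j) _ hanti (by omega) hposβ hid
  · have hid : phiL c (wordC cart Lc cc)
        = phiL c (wordC cart Lc b) + (j:ℝ) • (-(c.wWord Lc (c.simple i))) := by
      rw [hcm, phiL_wordC c cart hcart, smul_neg, ← sub_eq_add_neg]
    exact sigma_helper k c cart hcart b cc Lc Lc j _ hanti h0 hnegβ hid

end NilKey
section NilAlg

open Finset

variable {n : ℕ}

lemma Xm_mul (k : Type) [Field k] (a b : WtLat n) : Xm k a * Xm k b = Xm k (a + b) := by
  unfold Xm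
  rw [AddMonoidAlgebra.single_mul_single, one_mul]

lemma Xm_sub_one_ne (k : Type) [Field k] {a : WtLat n} (ha : a ≠ 0) : Xm k a - 1 ≠ 0 := by
  intro h
  have h1 : (Xm k a - 1).coeff a = 0 := by rw [h]; rfl
  unfold Xm at h1
  rw [AddMonoidAlgebra.one_def] at h1
  rw [AddMonoidAlgebra.coeff_sub, AddMonoidAlgebra.coeff_single, AddMonoidAlgebra.coeff_single,
    Finsupp.sub_apply, Finsupp.single_eq_same, Finsupp.single_eq_of_ne' (Ne.symm ha),
    sub_zero] at h1
  exact one_ne_zero h1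

lemma aC_ne (c : RootCtx n) (cart : Fin n → Fin n → ℤ)
    (hcart : ∀ i j, (cart i j : ℝ)
      = 2 * ⟪c.simple j, c.simple i⟫ / ⟪c.simple i, c.simple i⟫) (i : Fin n) :
    aC cart i ≠ 0 := by
  intro h
  have h2 : cart i i = 0 := congrFun h i
  rw [cart_diag c cart hcart i] at h2
  exact two_ne_zero h2

lemma geom_pos (k : Type) [Field k] (x α : WtLat n) (M : ℕ) :
    (Xm k α - 1) * ∑ t ∈ Finset.range M, Xm k (x - ((t:ℤ)+1) • α)
      = Xm k x - Xm k (x - (M:ℤ) • α) := by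
  induction M with
  | zero => simp
  | succ M ih =>
      rw [Finset.sum_range_succ, mul_add, ih]
      have e : (Xm k α - 1) * Xm k (x - ((M:ℤ)+1) • α)
          = Xm k (x - (M:ℤ) • α) - Xm k (x - ((M:ℤ)+1) • α) := by
        rw [sub_mul, one_mul, Xm_mul]
        have : α + (x - ((M:ℤ)+1) • α) = x - (M:ℤ) • α := by
          funext l
          simp only [Pi.add_apply, Pi.sub_apply, Pi.smul_apply, smul_eq_mul]
          ring
        rw [this]
      rw [e]
      push_cast
      abel

lemma geom_neg (k : Type) [Field k] (x α : WtLat n) (M : ℕ) :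
    (Xm k α - 1) * ∑ t ∈ Finset.range M, Xm k (x + (t:ℤ) • α)
      = Xm k (x + (M:ℤ) • α) - Xm k x := by
  induction M with
  | zero => simp
  | succ M ih =>
      rw [Finset.sum_range_succ, mul_add, ih]
      have e : (Xm k α - 1) * Xm k (x + (M:ℤ) • α)
          = Xm k (x + ((M:ℤ)+1) • α) - Xm k (x + (M:ℤ) • α) := by
        rw [sub_mul, one_mul, Xm_mul]
        have : α + (x + (M:ℤ) • α) = x + ((M:ℤ)+1) • α := by
          funext l
          simp only [Pi.add_apply, Pi.smul_apply, smul_eq_mul]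
          ring
        rw [this]
      rw [e]
      push_cast
      abel

lemma key_lemma2 (k : Type) [Field k] (c : RootCtx n) (cart : Fin n → Fin n → ℤ)
    (hcart : ∀ i j, (cart i j : ℝ)
      = 2 * ⟪c.simple j, c.simple i⟫ / ⟪c.simple i, c.simple i⟫)
    (b : WtLat n) (i : Fin n) (j : ℤ) (h0 : 0 < j) (hm : j < -(b i)) :
    Xm k (b + j • aC cart i) ∈ SigmaPlus k cart b := by
  have hsi : (sC cart i b) i = -(b i) := by
    unfold sC
    rw [cart_diag c cart hcart i]
    ring
  have hm' : -(b i) - j < (sC cart i b) i := by rw [hsi]; omega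
  have h := key_lemma k c cart hcart (sC cart i b) i (-(b i) - j) (by omega) hm'
  have hexp : sC cart i b - (-(b i) - j) • aC cart i = b + j • aC cart i := by
    funext l
    simp only [sC, aC, Pi.sub_apply, Pi.add_apply, Pi.smul_apply, smul_eq_mul]
    ring
  rw [hexp, SigmaPlus_sC k c cart hcart] at h
  exact h

end NilAlg
/-- formula (2.37).  For b ∈ P and 1 ≤ i ≤ n, modulo Σ₊(b) the
operator T̄'_i (with (X_{α_i}−1)·T̄'_i(f) = X_{α_i}·f − s_i(f)) satisfies:
T̄'_i(X_b) ≡ X_{s_i(b)} + X_b if (b,α_i^∨) > 0; T̄'_i(X_b) = X_b if (b,α_i^∨) = 0;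
and T̄'_i(X_b) ≡ 0 if (b,α_i^∨) < 0. -/
theorem nil_DL_on_monomials {n : ℕ} (k : Type) [Field k] [CharZero k]
    (c : RootCtx n) (cart : Fin n → Fin n → ℤ)
    (hcart : ∀ i j, (cart i j : ℝ)
      = 2 * ⟪c.simple j, c.simple i⟫ / ⟪c.simple i, c.simple i⟫)
    (sA : Fin n → (GA k n →ₐ[k] GA k n))
    (hsA : ∀ i b, sA i (Xm k b) = Xm k (sC cart i b))
    (T : Fin n → (GA k n →ₗ[k] GA k n))
    (hT : ∀ i f, (Xm k (aC cart i) - 1) * T i f = Xm k (aC cart i) * f - sA i f)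
    (b : WtLat n) (i : Fin n) :
    (0 < b i → T i (Xm k b) - (Xm k (sC cart i b) + Xm k b) ∈ SigmaPlus k cart b) ∧
    (b i = 0 → T i (Xm k b) = Xm k b) ∧
    (b i < 0 → T i (Xm k b) ∈ SigmaPlus k cart b) := by
  classical
  have hAne : Xm k (aC cart i) - 1 ≠ 0 := Xm_sub_one_ne k (aC_ne c cart hcart i)
  refine ⟨?_, ?_, ?_⟩
  · -- (b, α_i^∨) > 0
    intro hbi
    obtain ⟨M, hM⟩ : ∃ M : ℕ, (M:ℤ) = b i := ⟨(b i).toNat, Int.toNat_of_nonneg hbi.le⟩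
    obtain ⟨M', rfl⟩ : ∃ M', M = M' + 1 := ⟨M - 1, by omega⟩
    have hsb : sC cart i b = b - ((M' + 1 : ℕ):ℤ) • aC cart i := by
      funext l
      simp only [sC, aC, Pi.sub_apply, Pi.smul_apply, smul_eq_mul]
      rw [hM]
    have hu : T i (Xm k b)
        = Xm k b + ∑ t ∈ Finset.range (M'+1), Xm k (b - ((t:ℤ)+1) • aC cart i) := by
      apply mul_left_cancel₀ hAne
      rw [hT i (Xm k b), hsA, hsb, Xm_mul, mul_add, geom_pos, sub_mul, one_mul, Xm_mul]
      abel
    have hlast : b - (((M':ℕ):ℤ)+1) • aC cart i = sC cart i b := by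
      rw [hsb]
      push_cast
      rfl
    have heq2 : T i (Xm k b) - (Xm k (sC cart i b) + Xm k b)
        = ∑ t ∈ Finset.range M', Xm k (b - ((t:ℤ)+1) • aC cart i) := by
      rw [hu, Finset.sum_range_succ, hlast]
      ring
    rw [heq2]
    apply Submodule.sum_mem
    intro t ht
    have ht' : (t:ℤ) < M' := by exact_mod_cast Finset.mem_range.mp ht
    have hMb : ((M':ℤ)) + 1 = b i := by exact_mod_cast hM
    exact key_lemma k c cart hcart b i ((t:ℤ)+1) (by omega) (by omega)
  · -- (b, α_i^∨) = 0
    intro hbi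
    have hsb : sC cart i b = b := by
      funext l
      simp [sC, hbi]
    apply mul_left_cancel₀ hAne
    rw [hT i (Xm k b), hsA, hsb]
    ring
  · -- (b, α_i^∨) < 0
    intro hbi
    obtain ⟨P', hP⟩ : ∃ P' : ℕ, ((P':ℤ)) = -(b i) - 1 :=
      ⟨(-(b i) - 1).toNat, Int.toNat_of_nonneg (by omega)⟩
    have hu : T i (Xm k b)
        = -∑ t ∈ Finset.range P', Xm k ((b + aC cart i) + (t:ℤ) • aC cart i) := by
      apply mul_left_cancel₀ hAne
      rw [hT i (Xm k b), hsA, mul_neg, geom_neg]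
      have h2 : sC cart i b = (b + aC cart i) + (P':ℤ) • aC cart i := by
        funext l
        simp only [sC, aC, Pi.sub_apply, Pi.add_apply, Pi.smul_apply, smul_eq_mul]
        rw [hP]
        ring
      rw [h2, Xm_mul, show aC cart i + b = b + aC cart i from add_comm _ _]
      ring
    rw [hu]
    apply Submodule.neg_mem
    apply Submodule.sum_mem
    intro t ht
    have ht' : (t:ℤ) < P' := by exact_mod_cast Finset.mem_range.mp ht
    have hexp : (b + aC cart i) + (t:ℤ) • aC cart i = b + ((t:ℤ)+1) • aC cart i := by
      funext l
      simp only [aC, Pi.add_apply, Pi.smul_apply, smul_eq_mul]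
      ring
    rw [hexp]
    exact key_lemma2 k c cart hcart b i ((t:ℤ)+1) (by omega) (by omega)
end NilDescent
end
end
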